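/- (Lemma 2, second part.) Under the construction setup, any two Golay complementary sets belonging to different CCCs have a zero cross-correlation zone of width 2^{m−s}: for all 0 ≤ t_1 ≠ t_1' ≤ 2^s−1 and all 0 ≤ t_2, t_2' ≤ 2^{k+1}−1, one has Σ_{ν=0}^{2^{k+1}−1} γ(s^{(t_1,t_2)}_ν, s^{(t_1',t_2')}_ν)(u) = 0 for all shifts |u| < 2^{m−s}, where s^{(t_1,t_2)}_ν (0 ≤ ν ≤ 2^{k+1}−1) denote the sequences of S^{(t_1,t_2)} (indexed by (d,d_0,…,d_{k−1})). -/

import Mathlib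

/-- Aperiodic cross-correlation function (ACCF) of two complex sequences of length `L`,
for an integer shift `u` with `−L < u ≤ L`:
`γ(a,b)(u) = Σ_{i=0}^{L−1−u} a_i · conj(b_{i+u})` for `0 ≤ u`, and
`γ(a,b)(u) = Σ_{i=0}^{L+u−1} a_{i−u} · conj(b_i)` for `u < 0`. -/
noncomputable def accf (L : ℕ) (a b : ℕ → ℂ) (u : ℤ) : ℂ :=
  if 0 ≤ u then ∑ i ∈ Finset.range (L - u.toNat), a i * (starRingEnd ℂ) (b (i + u.toNat))
  else ∑ i ∈ Finset.range (L - (-u).toNat), a (i + (-u).toNat) * (starRingEnd ℂ) (b i)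

/-- ACCF for a nonnegative shift `u : ℕ`. -/
noncomputable def accfN (L : ℕ) (a b : ℕ → ℂ) (u : ℕ) : ℂ :=
  ∑ i ∈ Finset.range (L - u), a i * (starRingEnd ℂ) (b (i + u))

/-- Periodic cross-correlation function of two sequences of length `N`. -/
noncomputable def pccf (N : ℕ) (x y : ℕ → ℂ) (u : ℕ) : ℂ :=
  ∑ n ∈ Finset.range N, x n * (starRingEnd ℂ) (y ((n + u) % N))

/-- The `t`-th bit of `x`, as an element of `ZMod q`. -/
def bitc (q : ℕ) (x t : ℕ) : ZMod q := if x.testBit t then 1 else 0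

/-- The `t`-th bit of `x`, as a natural number. -/
def bitn (x t : ℕ) : ℕ := if x.testBit t then 1 else 0

/-- `ω = exp(2π√−1/q)`. -/
noncomputable def omegaQ (q : ℕ) : ℂ := Complex.exp (2 * Real.pi * Complex.I / (q : ℂ))

/-- The construction setup of Lemma 2/Theorem 1: integers `0 ≤ s ≤ k ≤ m−2`, an even
integer `q ≥ 2`, index sets `J = {j_0,…,j_{k−1−s}} ⊆ {0,…,m−s−1}` and
`I = {i_0,…,i_{m−k−1}} = {0,…,m−s−1} \ J`, a permutation `π` of `{0,…,m−k−1}`,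
and a GBF `f : {0,1}^m → ℤ_q` (written as a function of the index `x < 2^m`) all of whose
restrictions over the variables `x_{j_0},…,x_{j_{k−s−1}}` are of the prescribed
path-plus-isolated-vertices quadratic form. -/
structure ZCZSetup where
  /-- the (even) alphabet size -/
  q : ℕ
  hq : 2 ≤ q
  hqeven : Even q
  m : ℕ
  k : ℕ
  s : ℕ
  hsk : s ≤ k
  hkm : k + 2 ≤ m
  /-- `jv β = j_β` for `β < k − s` (the non-forced part of `J`) -/
  jv : ℕ → ℕ
  /-- `iv β = i_β` for `β < m − k` (an enumeration of `I`) -/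
  iv : ℕ → ℕ
  /-- the permutation `π` of `{0,…,m−k−1}` -/
  perm : ℕ → ℕ
  hperm : Set.BijOn perm (Set.Iio (m - k)) (Set.Iio (m - k))
  hjv_lt : ∀ β < k - s, jv β < m - s
  hjv_inj : ∀ β₁ < k - s, ∀ β₂ < k - s, jv β₁ = jv β₂ → β₁ = β₂
  hiv_lt : ∀ β < m - k, iv β < m - s
  hiv_inj : ∀ β₁ < m - k, ∀ β₂ < m - k, iv β₁ = iv β₂ → β₁ = β₂
  hdisj : ∀ β₁ < k - s, ∀ β₂ < m - k, jv β₁ ≠ iv β₂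
  /-- the GBF `f`, as a function of the index `x` (with `j`-th bit `x_j`) -/
  f : ℕ → ZMod q
  hf : ∀ e : ℕ → Bool, ∃ u : ℕ → ZMod q, ∃ v' : ℕ → ZMod q, ∃ v : ZMod q,
    ∀ x < 2 ^ m, (∀ β < k - s, x.testBit (jv β) = e β) →
      f x = ((q / 2 : ℕ) : ZMod q) * (∑ β ∈ Finset.range (m - k - 1),
              bitc q x (iv (perm β)) * bitc q x (iv (perm (β + 1))))
          + (∑ β ∈ Finset.range (m - k), u β * bitc q x (iv β))
          + (∑ β ∈ Finset.range s, v' β * bitc q x (m - s + β)) + v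

namespace ZCZSetup

variable (C : ZCZSetup)

/-- The full tuple `(j_0,…,j_{k−1})`: `j_β = jv β` for `β < k − s` and
`j_{k−s+β} = m − s + β` for `0 ≤ β < s`. -/
def jfull (β : ℕ) : ℕ :=
  if β < C.k - C.s then C.jv β else C.m - C.s + (β - (C.k - C.s))

/-- The bits `b_0,…,b_{k+s+1}`: `t_2 = Σ_{β=0}^{k} b_β 2^β` and
`t_1 = Σ_{β=0}^{s−1} b_{k+1+β} 2^β`. -/
def bbit (t1 t2 β : ℕ) : ℕ :=
  if β < C.k + 1 then bitn t2 β else bitn t1 (β - (C.k + 1))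

/-- `γ_1 = i_{π(0)}`, an end vertex of the path. -/
def gamma1 : ℕ := C.iv (C.perm 0)

/-- `γ_2 = i_{π(m−k−1)}`, the other end vertex of the path. -/
def gamma2 : ℕ := C.iv (C.perm (C.m - C.k - 1))

/-- The GBF (as a function of the index `x`) of the `ν`-th sequence of `S^{(t_1,t_2)}`,
where `ν = d·2^k + Σ_{β=0}^{k−1} d_β 2^β` encodes `(d, d_0,…,d_{k−1})`. -/
def gExp (t1 t2 ν x : ℕ) : ZMod C.q :=
  C.f x + ((C.q / 2 : ℕ) : ZMod C.q) *
    ((∑ β ∈ Finset.range C.k, bitc C.q ν β * bitc C.q x (C.jfull β))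
     + bitc C.q ν C.k * bitc C.q x C.gamma1
     + (∑ β ∈ Finset.range C.k, ((C.bbit t1 t2 β : ℕ) : ZMod C.q) * bitc C.q x (C.jfull β))
     + (∑ β ∈ Finset.Ico (C.k - C.s) C.k,
          bitc C.q ν β * ((C.bbit t1 t2 (C.s + 1 + β) : ℕ) : ZMod C.q))
     + ((C.bbit t1 t2 C.k : ℕ) : ZMod C.q) * bitc C.q x C.gamma2)

/-- The `ν`-th sequence `s^{(t_1,t_2)}_ν` of `S^{(t_1,t_2)}` (a complex sequence of
length `2^m`). -/
noncomputable def Sseq (t1 t2 ν : ℕ) : ℕ → ℂ :=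
  fun x => omegaQ C.q ^ (C.gExp t1 t2 ν x).val

end ZCZSetup


noncomputable def omegaQ' (q : ℕ) : ℂ := omegaQ q

lemma omegaQ'_def (q : ℕ) : omegaQ' q = Complex.exp (2 * Real.pi * Complex.I / (q : ℂ)) := rfl

section Chi
variable (q : ℕ)

noncomputable def chiQ (z : ZMod q) : ℂ := omegaQ' q ^ z.val
noncomputable def epsQ (z : ZMod q) : ℂ := (-1 : ℂ) ^ z.val

variable {q}
set_option linter.unusedSectionVars false

lemma omegaQ'_ne_zero : omegaQ' q ≠ 0 := Complex.exp_ne_zero _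

lemma omegaQ'_pow_q (hq : q ≠ 0) : omegaQ' q ^ q = 1 := by
  rw [omegaQ'_def, ← Complex.exp_nat_mul]
  have : (q : ℂ) ≠ 0 := Nat.cast_ne_zero.mpr hq
  rw [show (q : ℂ) * (2 * Real.pi * Complex.I / q) = 2 * Real.pi * Complex.I by field_simp]
  exact Complex.exp_two_pi_mul_I

lemma omegaQ'_pow_mod (hq : q ≠ 0) (n : ℕ) : omegaQ' q ^ (n % q) = omegaQ' q ^ n := by
  conv_rhs => rw [← Nat.mod_add_div n q]
  rw [pow_add, pow_mul, omegaQ'_pow_q hq, one_pow, mul_one]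

variable [NeZero q]

lemma chiQ_natCast (n : ℕ) : chiQ q (n : ZMod q) = omegaQ' q ^ n := by
  rw [chiQ, ZMod.val_natCast, omegaQ'_pow_mod (NeZero.ne q)]

lemma chiQ_add (a b : ZMod q) : chiQ q (a + b) = chiQ q a * chiQ q b := by
  rw [chiQ, ZMod.val_add, omegaQ'_pow_mod (NeZero.ne q), pow_add]; rfl

lemma chiQ_zero : chiQ q (0 : ZMod q) = 1 := by simp [chiQ]

lemma chiQ_ne_zero (a : ZMod q) : chiQ q a ≠ 0 := pow_ne_zero _ omegaQ'_ne_zero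

lemma chiQ_neg (a : ZMod q) : chiQ q (-a) = (chiQ q a)⁻¹ := by
  have h : chiQ q a * chiQ q (-a) = 1 := by
    rw [← chiQ_add]; simp [chiQ_zero]
  field_simp [chiQ_ne_zero a] at h ⊢
  linear_combination h

lemma conj_omegaQ' : (starRingEnd ℂ) (omegaQ' q) = (omegaQ' q)⁻¹ := by
  rw [omegaQ'_def, ← Complex.exp_conj, ← Complex.exp_neg]
  congr 1
  simp only [map_div₀, map_mul, Complex.conj_I, map_ofNat, Complex.conj_natCast,
    Complex.conj_ofReal]
  ring

lemma conj_chiQ (a : ZMod q) : (starRingEnd ℂ) (chiQ q a) = chiQ q (-a) := by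
  rw [chiQ, map_pow, conj_omegaQ', chiQ_neg, chiQ, inv_pow]

lemma chiQ_sub (a b : ZMod q) : chiQ q a * (starRingEnd ℂ) (chiQ q b) = chiQ q (a - b) := by
  rw [conj_chiQ, ← chiQ_add, sub_eq_add_neg]

lemma epsQ_natCast (n : ℕ) (hq : Even q) : epsQ q (n : ZMod q) = (-1 : ℂ) ^ n := by
  rw [epsQ, ZMod.val_natCast]
  conv_rhs => rw [← Nat.mod_add_div n q]
  rw [pow_add, pow_mul, hq.neg_one_pow, one_pow, mul_one]

lemma epsQ_add (hq : Even q) (a b : ZMod q) : epsQ q (a + b) = epsQ q a * epsQ q b := by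
  rw [epsQ, ZMod.val_add, show ((-1:ℂ)) ^ ((a.val + b.val) % q) = (-1:ℂ) ^ (a.val + b.val) by
    conv_rhs => rw [← Nat.mod_add_div (a.val + b.val) q]
    rw [pow_add, pow_mul, hq.neg_one_pow, one_pow, mul_one], pow_add]
  rfl

lemma epsQ_zero : epsQ q (0 : ZMod q) = 1 := by simp [epsQ]

lemma epsQ_sum (hq : Even q) {ι : Type*} (s : Finset ι) (f : ι → ZMod q) :
    epsQ q (∑ i ∈ s, f i) = ∏ i ∈ s, epsQ q (f i) := by
  classical
  induction s using Finset.induction with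
  | empty => simp [epsQ_zero]
  | insert _ _ h ih => rw [Finset.sum_insert h, Finset.prod_insert h, epsQ_add hq, ih]

lemma epsQ_one (hq2 : 2 ≤ q) : epsQ q (1 : ZMod q) = -1 := by
  have : (1 : ZMod q).val = 1 := ZMod.val_one_eq_one_mod q ▸ Nat.mod_eq_of_lt (by omega)
  rw [epsQ, this, pow_one]

lemma epsQ_mem (a : ZMod q) : epsQ q a = 1 ∨ epsQ q a = -1 := by
  rw [epsQ]; rcases Nat.even_or_odd a.val with h | h
  · exact Or.inl (h.neg_one_pow)
  · exact Or.inr (h.neg_one_pow)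

lemma epsQ_neg_one (hq2 : 2 ≤ q) (hq : Even q) : epsQ q (-1 : ZMod q) = -1 := by
  have h1 := epsQ_one (q := q) hq2
  have := epsQ_add hq (1 : ZMod q) (-1)
  simp only [add_neg_cancel, epsQ_zero] at this
  rcases epsQ_mem (q := q) (-1) with h | h
  · rw [h1, h] at this; norm_num at this
  · exact h

lemma chiQ_half_mul (hq2 : 2 ≤ q) (hq : Even q) (z : ZMod q) :
    chiQ q (((q / 2 : ℕ) : ZMod q) * z) = epsQ q z := by
  have hz : (((q / 2 : ℕ) : ZMod q) * z) = (((q / 2) * z.val : ℕ) : ZMod q) := by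
    push_cast [ZMod.natCast_val, ZMod.cast_id]; ring
  rw [hz, chiQ_natCast, pow_mul]
  have hom : omegaQ' q ^ (q / 2) = -1 := by
    rw [omegaQ'_def, ← Complex.exp_nat_mul]
    have hq0 : (q : ℂ) ≠ 0 := Nat.cast_ne_zero.mpr (by omega)
    have h2 : ((q / 2 : ℕ) : ℂ) * 2 = (q : ℂ) := by
      obtain ⟨r, hr⟩ := hq
      have : (q / 2) * 2 = q := by omega
      calc ((q / 2 : ℕ) : ℂ) * 2 = (((q/2) * 2 : ℕ) : ℂ) := by push_cast; ring
        _ = (q : ℂ) := by rw [this]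
    rw [show ((q / 2 : ℕ) : ℂ) * (2 * Real.pi * Complex.I / q)
        = Real.pi * Complex.I by rw [mul_div_assoc', div_eq_iff hq0]; linear_combination Real.pi * Complex.I * h2]
    exact Complex.exp_pi_mul_I
  rw [hom, epsQ]

lemma sum_prod_bits (n : ℕ) (g : ℕ → ℂ) :
    ∑ ν ∈ Finset.range (2 ^ n), ∏ β ∈ Finset.range n, (if ν.testBit β then g β else 1)
      = ∏ β ∈ Finset.range n, (1 + g β) := by
  induction n with
  | zero => simp
  | succ n ih =>
    rw [show 2^(n+1) = 2^n + 2^n by ring, Finset.sum_range_add]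
    have h1 : ∀ ν ∈ Finset.range (2 ^ n),
        (∏ β ∈ Finset.range (n + 1), (if ν.testBit β then g β else 1))
          = ∏ β ∈ Finset.range n, (if ν.testBit β then g β else 1) := by
      intro ν hν
      rw [Finset.prod_range_succ, Nat.testBit_lt_two_pow (Finset.mem_range.mp hν), if_neg
        (by simp), mul_one]
    have h2 : ∀ ν ∈ Finset.range (2 ^ n),
        (∏ β ∈ Finset.range (n + 1), (if (2 ^ n + ν).testBit β then g β else 1))
          = (∏ β ∈ Finset.range n, (if ν.testBit β then g β else 1)) * g n := by
      intro ν hν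
      have hν' := Finset.mem_range.mp hν
      rw [Finset.prod_range_succ, Nat.testBit_two_pow_add_eq,
        Nat.testBit_lt_two_pow hν']
      simp only [Bool.not_false, if_true]
      congr 1
      refine Finset.prod_congr rfl fun β hβ => ?_
      rw [Nat.testBit_two_pow_add_gt (Finset.mem_range.mp hβ)]
    rw [Finset.sum_congr rfl h1, Finset.sum_congr rfl h2, ← Finset.sum_mul, ih,
      Finset.prod_range_succ]
    ring

lemma xor_two_pow_of_testBit_false {x p : ℕ} (h : x.testBit p = false) :
    x ^^^ 2 ^ p = x + 2 ^ p := by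
  have hx : x = 2 ^ (p + 1) * (x / 2 ^ (p + 1)) + x % 2 ^ (p + 1) := (Nat.div_add_mod _ _).symm
  set a := x / 2 ^ (p + 1) with ha
  set r := x % 2 ^ (p + 1) with hr
  have hrlt : r < 2 ^ (p + 1) := Nat.mod_lt _ (Nat.pow_pos (by norm_num))
  have hrbit : r.testBit p = false := by
    rw [hr, Nat.testBit_mod_two_pow]
    simp [h]
  have hrp : r < 2 ^ p := by
    have hpow : (2:ℕ) ^ (p + 1) = 2 ^ p + 2 ^ p := by ring
    rcases Nat.lt_or_ge r (2 ^ p) with h' | h'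
    · exact h'
    · exfalso
      have hd2 : r / 2 ^ p < 2 := Nat.div_lt_of_lt_mul (by omega)
      have hd1 : 1 ≤ r / 2 ^ p := (Nat.one_le_div_iff (Nat.pow_pos (by norm_num))).mpr h'
      have : r / 2 ^ p = 1 := by omega
      rw [Nat.testBit_eq_decide_div_mod_eq, this] at hrbit
      simp at hrbit
  apply Nat.eq_of_testBit_eq
  intro j
  have key : x + 2 ^ p = 2 ^ (p + 1) * a + (2 ^ p + r) := by omega
  rw [key, Nat.testBit_xor, Nat.testBit_two_pow]
  have hb : 2 ^ p + r < 2 ^ (p + 1) := by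
    have : (2:ℕ) ^ (p+1) = 2 ^ p + 2 ^ p := by ring
    omega
  rw [Nat.testBit_two_pow_mul_add a hb j]
  rcases lt_trichotomy j p with hj | hj | hj
  · rw [if_pos (by omega), Nat.testBit_two_pow_add_gt hj]
    have : x.testBit j = r.testBit j := by
      rw [hr, Nat.testBit_mod_two_pow]; simp [show j < p + 1 by omega]
    rw [this]
    simp [show ¬ (p = j) by omega]
  · subst hj
    rw [if_pos (by omega), Nat.testBit_two_pow_add_eq, hrbit, h]
    simp
  · rw [if_neg (by omega)]
    have : x.testBit j = a.testBit (j - (p + 1)) := by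
      conv_lhs => rw [hx]
      rw [Nat.testBit_two_pow_mul_add a hrlt j, if_neg (by omega)]
    rw [this]
    simp [show ¬ (p = j) by omega]

lemma xor_two_pow_of_testBit_true {x p : ℕ} (h : x.testBit p = true) :
    (x ^^^ 2 ^ p) + 2 ^ p = x := by
  have hb : (x ^^^ 2 ^ p).testBit p = false := by
    rw [Nat.testBit_xor, h, Nat.testBit_two_pow_self]; rfl
  have := xor_two_pow_of_testBit_false hb
  rw [xor_cancel_right] at this
  exact this.symm

lemma testBit_xor_two_pow (x p j : ℕ) :
    (x ^^^ 2 ^ p).testBit j = if p = j then !(x.testBit j) else x.testBit j := by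
  rw [Nat.testBit_xor, Nat.testBit_two_pow]
  by_cases h : p = j <;> simp [h, Bool.xor_comm]

lemma epsQ_bit_sub {q : ℕ} [NeZero q] (hq2 : 2 ≤ q) (hqe : Even q) (a b : Bool) :
    epsQ q (((if a then 1 else 0) - (if b then 1 else 0) : ZMod q))
      = if a = b then 1 else -1 := by
  cases a <;> cases b <;>
    simp [epsQ_zero, epsQ_one hq2, epsQ_neg_one hq2 hqe, zero_sub, sub_zero]

lemma epsQ_bit_sub_add {q : ℕ} [NeZero q] (hq2 : 2 ≤ q) (hqe : Even q) (a b c d : Bool) :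
    epsQ q ((((if a then 1 else 0) - (if b then 1 else 0))
        + ((if c then 1 else 0) - (if d then 1 else 0)) : ZMod q))
      = if ((a = b) ↔ (c = d)) then 1 else -1 := by
  rw [epsQ_add hqe, epsQ_bit_sub hq2 hqe, epsQ_bit_sub hq2 hqe]
  cases a <;> cases b <;> cases c <;> cases d <;> norm_num

lemma bitn_cast {q : ℕ} (x t : ℕ) :
    ((bitn x t : ℕ) : ZMod q) = if x.testBit t then 1 else 0 := by
  rw [bitn]; split <;> simp

namespace ZCZSetup

variable (C : ZCZSetup)

noncomputable def hlf : ZMod C.q := ((C.q / 2 : ℕ) : ZMod C.q)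

def ccoef (t1 t1' t2 t2' x y β : ℕ) : ZMod C.q :=
  if β = C.k then bitc C.q x C.gamma1 - bitc C.q y C.gamma1
  else bitc C.q x (C.jfull β) - bitc C.q y (C.jfull β) +
    (if C.k - C.s ≤ β then
      ((C.bbit t1 t2 (C.s + 1 + β) : ℕ) : ZMod C.q)
        - ((C.bbit t1' t2' (C.s + 1 + β) : ℕ) : ZMod C.q)
    else 0)

noncomputable def czero (t1 t1' t2 t2' x y : ℕ) : ZMod C.q :=
  C.f x - C.f y + C.hlf *
    ((∑ β ∈ Finset.range C.k, (((C.bbit t1 t2 β : ℕ) : ZMod C.q) * bitc C.q x (C.jfull β)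
        - ((C.bbit t1' t2' β : ℕ) : ZMod C.q) * bitc C.q y (C.jfull β)))
     + ((C.bbit t1 t2 C.k : ℕ) : ZMod C.q) * bitc C.q x C.gamma2
     - ((C.bbit t1' t2' C.k : ℕ) : ZMod C.q) * bitc C.q y C.gamma2)

lemma gExp_sub (t1 t1' t2 t2' ν x y : ℕ) :
    C.gExp t1 t2 ν x - C.gExp t1' t2' ν y
      = C.czero t1 t1' t2 t2' x y
        + C.hlf * ∑ β ∈ Finset.range (C.k + 1), bitc C.q ν β * C.ccoef t1 t1' t2 t2' x y β := by
  have hsplit : ∑ β ∈ Finset.range (C.k + 1), bitc C.q ν β * C.ccoef t1 t1' t2 t2' x y β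
      = ((∑ β ∈ Finset.range C.k, bitc C.q ν β * bitc C.q x (C.jfull β))
          - (∑ β ∈ Finset.range C.k, bitc C.q ν β * bitc C.q y (C.jfull β)))
        + bitc C.q ν C.k * (bitc C.q x C.gamma1 - bitc C.q y C.gamma1)
        + ((∑ β ∈ Finset.Ico (C.k - C.s) C.k,
              bitc C.q ν β * ((C.bbit t1 t2 (C.s + 1 + β) : ℕ) : ZMod C.q))
            - (∑ β ∈ Finset.Ico (C.k - C.s) C.k,
              bitc C.q ν β * ((C.bbit t1' t2' (C.s + 1 + β) : ℕ) : ZMod C.q))) := by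
    rw [Finset.sum_range_succ]
    have hk : C.ccoef t1 t1' t2 t2' x y C.k
        = bitc C.q x C.gamma1 - bitc C.q y C.gamma1 := by rw [ccoef, if_pos rfl]
    have h1 : ∀ β ∈ Finset.range C.k, bitc C.q ν β * C.ccoef t1 t1' t2 t2' x y β
        = (bitc C.q ν β * bitc C.q x (C.jfull β) - bitc C.q ν β * bitc C.q y (C.jfull β))
          + bitc C.q ν β * (if C.k - C.s ≤ β then
              ((C.bbit t1 t2 (C.s + 1 + β) : ℕ) : ZMod C.q)
                - ((C.bbit t1' t2' (C.s + 1 + β) : ℕ) : ZMod C.q) else 0) := by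
      intro β hβ
      rw [ccoef, if_neg (by have := Finset.mem_range.mp hβ; omega)]
      ring
    rw [Finset.sum_congr rfl h1, Finset.sum_add_distrib, Finset.sum_sub_distrib, hk]
    have h2 : ∑ β ∈ Finset.range C.k, bitc C.q ν β * (if C.k - C.s ≤ β then
          ((C.bbit t1 t2 (C.s + 1 + β) : ℕ) : ZMod C.q)
            - ((C.bbit t1' t2' (C.s + 1 + β) : ℕ) : ZMod C.q) else 0)
        = (∑ β ∈ Finset.Ico (C.k - C.s) C.k,
              bitc C.q ν β * ((C.bbit t1 t2 (C.s + 1 + β) : ℕ) : ZMod C.q))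
            - (∑ β ∈ Finset.Ico (C.k - C.s) C.k,
              bitc C.q ν β * ((C.bbit t1' t2' (C.s + 1 + β) : ℕ) : ZMod C.q)) := by
      rw [Finset.range_eq_Ico,
        ← Finset.sum_Ico_consecutive _ (Nat.zero_le (C.k - C.s)) (Nat.sub_le C.k C.s)]
      have hz : ∑ β ∈ Finset.Ico 0 (C.k - C.s), bitc C.q ν β * (if C.k - C.s ≤ β then
            ((C.bbit t1 t2 (C.s + 1 + β) : ℕ) : ZMod C.q)
              - ((C.bbit t1' t2' (C.s + 1 + β) : ℕ) : ZMod C.q) else 0) = 0 := by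
        apply Finset.sum_eq_zero
        intro β hβ
        rw [if_neg (by have := (Finset.mem_Ico.mp hβ).2; omega), mul_zero]
      rw [hz, zero_add, ← Finset.sum_sub_distrib]
      apply Finset.sum_congr rfl
      intro β hβ
      rw [if_pos (Finset.mem_Ico.mp hβ).1]
      ring
    rw [h2]
    ring
  rw [hsplit, gExp, gExp, czero]
  have e1 : ∑ β ∈ Finset.range C.k, (((C.bbit t1 t2 β : ℕ) : ZMod C.q) * bitc C.q x (C.jfull β)
        - ((C.bbit t1' t2' β : ℕ) : ZMod C.q) * bitc C.q y (C.jfull β))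
      = (∑ β ∈ Finset.range C.k, ((C.bbit t1 t2 β : ℕ) : ZMod C.q) * bitc C.q x (C.jfull β))
        - (∑ β ∈ Finset.range C.k, ((C.bbit t1' t2' β : ℕ) : ZMod C.q) * bitc C.q y (C.jfull β)) :=
    Finset.sum_sub_distrib _ _
  rw [e1, hlf]
  ring

lemma inner_sum (t1 t1' t2 t2' x y : ℕ) :
    ∑ ν ∈ Finset.range (2 ^ (C.k + 1)), chiQ C.q (C.gExp t1 t2 ν x - C.gExp t1' t2' ν y)
      = chiQ C.q (C.czero t1 t1' t2 t2' x y)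
        * ∏ β ∈ Finset.range (C.k + 1), (1 + epsQ C.q (C.ccoef t1 t1' t2 t2' x y β)) := by
  haveI : NeZero C.q := ⟨by have := C.hq; omega⟩
  have he : Even C.q := C.hqeven
  have hterm : ∀ ν, chiQ C.q (C.gExp t1 t2 ν x - C.gExp t1' t2' ν y)
      = chiQ C.q (C.czero t1 t1' t2 t2' x y)
        * ∏ β ∈ Finset.range (C.k + 1),
            (if ν.testBit β then epsQ C.q (C.ccoef t1 t1' t2 t2' x y β) else 1) := by
    intro ν
    rw [C.gExp_sub, chiQ_add]
    congr 1
    rw [hlf, chiQ_half_mul C.hq he, epsQ_sum he]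
    apply Finset.prod_congr rfl
    intro β _
    by_cases hb : ν.testBit β
    · rw [bitc, if_pos hb, one_mul, if_pos hb]
    · rw [bitc, if_neg hb, zero_mul, epsQ_zero, if_neg hb]
  rw [Finset.sum_congr rfl (fun ν _ => hterm ν), ← Finset.mul_sum, sum_prod_bits]

end ZCZSetup

namespace ZCZSetup

variable (C : ZCZSetup)

/-- validity (nonvanishing) conditions for a pair `(x, y)` -/
def bvalid (t1 t1' x y : ℕ) : Prop :=
  (∀ β ∈ Finset.range (C.k - C.s), x.testBit (C.jv β) = y.testBit (C.jv β)) ∧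
  (x.testBit C.gamma1 = y.testBit C.gamma1) ∧
  (∀ γ ∈ Finset.range C.s,
    ((x.testBit (C.m - C.s + γ) = y.testBit (C.m - C.s + γ)) ↔ (t1.testBit γ = t1'.testBit γ)))

lemma ccoef_low (t1 t1' t2 t2' x y β : ℕ) (hβ : β < C.k - C.s) :
    C.ccoef t1 t1' t2 t2' x y β = bitc C.q x (C.jv β) - bitc C.q y (C.jv β) := by
  have hsk := C.hsk
  rw [ccoef, if_neg (by omega), jfull, if_pos hβ, if_neg (by omega), add_zero]

lemma ccoef_mid (t1 t1' t2 t2' x y γ : ℕ) (hγ : γ < C.s) :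
    C.ccoef t1 t1' t2 t2' x y (C.k - C.s + γ)
      = (bitc C.q x (C.m - C.s + γ) - bitc C.q y (C.m - C.s + γ))
        + (((bitn t1 γ : ℕ) : ZMod C.q) - ((bitn t1' γ : ℕ) : ZMod C.q)) := by
  have hsk := C.hsk
  rw [ccoef, if_neg (by omega), jfull, if_neg (by omega),
    show C.k - C.s + γ - (C.k - C.s) = γ by omega, if_pos (by omega),
    show C.s + 1 + (C.k - C.s + γ) = C.k + 1 + γ by omega,
    bbit, if_neg (by omega), bbit, if_neg (by omega),
    show C.k + 1 + γ - (C.k + 1) = γ by omega]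

lemma ccoef_top (t1 t1' t2 t2' x y : ℕ) :
    C.ccoef t1 t1' t2 t2' x y C.k = bitc C.q x C.gamma1 - bitc C.q y C.gamma1 := by
  rw [ccoef, if_pos rfl]

lemma prod_eps_eq_zero (t1 t1' t2 t2' x y : ℕ) (h : ¬ C.bvalid t1 t1' x y) :
    ∏ β ∈ Finset.range (C.k + 1), (1 + epsQ C.q (C.ccoef t1 t1' t2 t2' x y β)) = 0 := by
  haveI : NeZero C.q := ⟨by have := C.hq; omega⟩
  have hq2 := C.hq
  have hqe := C.hqeven
  have hsk := C.hsk
  rw [bvalid] at h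
  rcases not_and_or.mp h with h1 | h23
  · push_neg at h1
    obtain ⟨β, hβ, hne⟩ := h1
    have hβ' := Finset.mem_range.mp hβ
    refine Finset.prod_eq_zero (Finset.mem_range.mpr (by omega : β < C.k + 1)) ?_
    rw [C.ccoef_low t1 t1' t2 t2' x y β hβ', bitc, bitc, epsQ_bit_sub hq2 hqe, if_neg hne]
    ring
  · rcases not_and_or.mp h23 with h2 | h3
    · refine Finset.prod_eq_zero (Finset.mem_range.mpr (by omega : C.k < C.k + 1)) ?_
      rw [C.ccoef_top, bitc, bitc, epsQ_bit_sub hq2 hqe, if_neg h2]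
      ring
    · push_neg at h3
      obtain ⟨γ, hγ, hne⟩ := h3
      have hγ' := Finset.mem_range.mp hγ
      have hne' : ¬ ((x.testBit (C.m - C.s + γ) = y.testBit (C.m - C.s + γ))
          ↔ (t1.testBit γ = t1'.testBit γ)) := by tauto
      refine Finset.prod_eq_zero
        (Finset.mem_range.mpr (by omega : C.k - C.s + γ < C.k + 1)) ?_
      rw [C.ccoef_mid t1 t1' t2 t2' x y γ hγ', bitc, bitc, bitn_cast, bitn_cast,
        epsQ_bit_sub_add hq2 hqe, if_neg hne']
      ring

lemma bvalid_self (t1 t1' : ℕ) (ht1 : t1 < 2 ^ C.s) (ht1' : t1' < 2 ^ C.s) (x : ℕ)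
    (h : C.bvalid t1 t1' x x) : t1 = t1' := by
  apply Nat.eq_of_testBit_eq
  intro γ
  rcases Nat.lt_or_ge γ C.s with hγ | hγ
  · exact (h.2.2 γ (Finset.mem_range.mpr hγ)).mp rfl
  · have h1 : t1 < 2 ^ γ := lt_of_lt_of_le ht1 (Nat.pow_le_pow_right (by norm_num) hγ)
    have h2 : t1' < 2 ^ γ := lt_of_lt_of_le ht1' (Nat.pow_le_pow_right (by norm_num) hγ)
    rw [Nat.testBit_lt_two_pow h1, Nat.testBit_lt_two_pow h2]

lemma cover (i : ℕ) (hi : i < C.m - C.s) :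
    (∃ β < C.k - C.s, C.jv β = i) ∨ (∃ β < C.m - C.k, C.iv β = i) := by
  classical
  set A := (Finset.range (C.k - C.s)).image C.jv with hAdef
  set B := (Finset.range (C.m - C.k)).image C.iv with hBdef
  have hA : A.card = C.k - C.s := by
    rw [hAdef, Finset.card_image_of_injOn, Finset.card_range]
    intro a ha b hb hab
    exact C.hjv_inj a (Finset.mem_range.mp ha) b (Finset.mem_range.mp hb) hab
  have hB : B.card = C.m - C.k := by
    rw [hBdef, Finset.card_image_of_injOn, Finset.card_range]
    intro a ha b hb hab
    exact C.hiv_inj a (Finset.mem_range.mp ha) b (Finset.mem_range.mp hb) hab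
  have hdisj : Disjoint A B := by
    rw [Finset.disjoint_left]
    rintro a ha hb
    obtain ⟨b1, hb1, rfl⟩ := Finset.mem_image.mp ha
    obtain ⟨b2, hb2, hb2e⟩ := Finset.mem_image.mp hb
    exact C.hdisj b1 (Finset.mem_range.mp hb1) b2 (Finset.mem_range.mp hb2) hb2e.symm
  have hsub : A ∪ B ⊆ Finset.range (C.m - C.s) := by
    intro a ha
    rcases Finset.mem_union.mp ha with h | h
    · obtain ⟨b, hb, rfl⟩ := Finset.mem_image.mp h
      exact Finset.mem_range.mpr (C.hjv_lt b (Finset.mem_range.mp hb))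
    · obtain ⟨b, hb, rfl⟩ := Finset.mem_image.mp h
      exact Finset.mem_range.mpr (C.hiv_lt b (Finset.mem_range.mp hb))
  have hcard : Finset.card (Finset.range (C.m - C.s)) ≤ (A ∪ B).card := by
    rw [Finset.card_union_of_disjoint hdisj, hA, hB, Finset.card_range]
    have := C.hsk; have := C.hkm
    omega
  have heq := Finset.eq_of_subset_of_card_le hsub hcard
  have hi' : i ∈ A ∪ B := by
    rw [heq]; exact Finset.mem_range.mpr hi
  rcases Finset.mem_union.mp hi' with h | h
  · obtain ⟨b, hb, hbe⟩ := Finset.mem_image.mp h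
    exact Or.inl ⟨b, Finset.mem_range.mp hb, hbe⟩
  · obtain ⟨b, hb, hbe⟩ := Finset.mem_image.mp h
    exact Or.inr ⟨b, Finset.mem_range.mp hb, hbe⟩

/-- the set of (permuted) path indices where `x` and `x + w` have differing bits -/
def dset (w x : ℕ) : Finset ℕ :=
  (Finset.range (C.m - C.k)).filter
    (fun β => ¬ (x.testBit (C.iv (C.perm β)) = (x + w).testBit (C.iv (C.perm β))))

lemma dset_nonempty (t1 t1' w x : ℕ) (hw : 0 < w) (hwlt : w < 2 ^ (C.m - C.s))
    (hv : C.bvalid t1 t1' x (x + w)) : (C.dset w x).Nonempty := by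
  rw [Finset.nonempty_iff_ne_empty]
  intro hemp
  have hiv : ∀ β < C.m - C.k, x.testBit (C.iv β) = (x + w).testBit (C.iv β) := by
    intro β hβ
    obtain ⟨a, ha, rfl⟩ := C.hperm.surjOn (show β ∈ Set.Iio (C.m - C.k) from hβ)
    by_contra hne
    have : a ∈ C.dset w x := by
      rw [dset, Finset.mem_filter]
      exact ⟨Finset.mem_range.mpr ha, hne⟩
    rw [hemp] at this
    exact absurd this (Finset.notMem_empty a)
  have hbits : ∀ i < C.m - C.s, x.testBit i = (x + w).testBit i := by
    intro i hi
    rcases C.cover i hi with ⟨β, hβ, rfl⟩ | ⟨β, hβ, rfl⟩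
    · exact hv.1 β (Finset.mem_range.mpr hβ)
    · exact hiv β hβ
  set T := 2 ^ (C.m - C.s) with hT
  have hTpos : 0 < T := Nat.pow_pos (by norm_num)
  have hmod : x % T = (x + w) % T := by
    have : x % T = x % T % T := (Nat.mod_mod_of_dvd _ dvd_rfl).symm
    apply Nat.eq_of_testBit_eq
    intro j
    rw [hT, Nat.testBit_mod_two_pow, Nat.testBit_mod_two_pow]
    by_cases hj : j < C.m - C.s
    · simp [hj, hbits j hj]
    · simp [hj]
  have h1 : (x + w) % T = (x % T + w % T) % T := Nat.add_mod x w T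
  have ha := Nat.mod_lt x hTpos
  have hb := Nat.mod_lt w hTpos
  have hw0 : w % T = 0 := by
    rcases Nat.lt_or_ge (x % T + w % T) T with h' | h'
    · rw [Nat.mod_eq_of_lt h'] at h1
      omega
    · have h2 : x % T + w % T - T < T := by omega
      rw [Nat.mod_eq_sub_mod h', Nat.mod_eq_of_lt h2] at h1
      omega
  rw [Nat.mod_eq_of_lt hwlt] at hw0
  omega

end ZCZSetup

namespace ZCZSetup

variable (C : ZCZSetup)

noncomputable def flip (w x : ℕ) : ℕ :=
  if h : (C.dset w x).Nonempty then
    x ^^^ 2 ^ (C.iv (C.perm ((C.dset w x).min' h - 1)))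
  else x

lemma flip_spec (t1 t1' t2 t2' w x : ℕ) (hw : 0 < w) (hwlt : w < 2 ^ (C.m - C.s))
    (hxw : x + w < 2 ^ C.m) (hv : C.bvalid t1 t1' x (x + w)) :
    C.flip w x + w < 2 ^ C.m ∧
    C.bvalid t1 t1' (C.flip w x) (C.flip w x + w) ∧
    C.flip w (C.flip w x) = x ∧
    C.flip w x ≠ x ∧
    chiQ C.q (C.czero t1 t1' t2 t2' (C.flip w x) (C.flip w x + w))
      = - chiQ C.q (C.czero t1 t1' t2 t2' x (x + w)) ∧
    (∀ β ∈ Finset.range (C.k + 1),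
      C.ccoef t1 t1' t2 t2' (C.flip w x) (C.flip w x + w) β
        = C.ccoef t1 t1' t2 t2' x (x + w) β) := by
  haveI : NeZero C.q := ⟨by have := C.hq; omega⟩
  have hq2 := C.hq
  have hqe := C.hqeven
  have hsk := C.hsk
  have hkm := C.hkm
  set y := x + w with hy
  have hne0 : (C.dset w x).Nonempty := C.dset_nonempty t1 t1' w x hw hwlt hv
  set β₀ := (C.dset w x).min' hne0 with hβ₀
  have hβ₀mem : β₀ ∈ C.dset w x := Finset.min'_mem _ _
  have hβ₀mem' := hβ₀mem
  rw [dset, Finset.mem_filter] at hβ₀mem'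
  obtain ⟨hβ₀r, hβ₀d⟩ := hβ₀mem'
  have hβ₀lt : β₀ < C.m - C.k := Finset.mem_range.mp hβ₀r
  have hmin : ∀ β, β < β₀ → x.testBit (C.iv (C.perm β)) = y.testBit (C.iv (C.perm β)) := by
    intro β hβ
    by_contra hne
    have hmem : β ∈ C.dset w x := by
      rw [dset, Finset.mem_filter]
      exact ⟨Finset.mem_range.mpr (by omega), hne⟩
    have := Finset.min'_le _ _ hmem
    omega
  have hβ₀pos : 0 < β₀ := by
    rcases Nat.eq_zero_or_pos β₀ with h0 | h
    · exfalso
      apply hβ₀d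
      rw [h0]
      have h21 := hv.2.1
      rw [gamma1] at h21
      exact h21
    · exact h
  set α := β₀ - 1 with hα
  have hα₀ : α + 1 = β₀ := by omega
  have hαlt : α < C.m - C.k := by omega
  have hα1 : α < C.m - C.k - 1 := by omega
  set p := C.iv (C.perm α) with hp
  have hflip : C.flip w x = x ^^^ 2 ^ p := by rw [flip, dif_pos hne0]
  set x' := x ^^^ 2 ^ p with hx'
  set y' := y ^^^ 2 ^ p with hy'
  have hpmem : C.perm α ∈ Set.Iio (C.m - C.k) := C.hperm.mapsTo hαlt
  have hplt : p < C.m - C.s := C.hiv_lt _ hpmem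
  have hpm : p < C.m := by omega
  have hxp : x.testBit p = y.testBit p := hmin α (by omega)
  have hbx : ∀ t, x'.testBit t = if p = t then !(x.testBit t) else x.testBit t :=
    fun t => testBit_xor_two_pow x p t
  have hby : ∀ t, y'.testBit t = if p = t then !(y.testBit t) else y.testBit t :=
    fun t => testBit_xor_two_pow y p t
  have hxkeep : ∀ t, t ≠ p → x'.testBit t = x.testBit t := by
    intro t ht; rw [hbx t, if_neg (fun h => ht h.symm)]
  have hykeep : ∀ t, t ≠ p → y'.testBit t = y.testBit t := by
    intro t ht; rw [hby t, if_neg (fun h => ht h.symm)]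
  have hxflip : x'.testBit p = !(x.testBit p) := by rw [hbx p, if_pos rfl]
  have hyflip : y'.testBit p = !(y.testBit p) := by rw [hby p, if_pos rfl]
  have hx'w : x' + w = y' := by
    cases hb : x.testBit p with
    | false =>
      have hb' : y.testBit p = false := by rw [← hxp]; exact hb
      rw [hx', hy', xor_two_pow_of_testBit_false hb, xor_two_pow_of_testBit_false hb']
      omega
    | true =>
      have hb' : y.testBit p = true := by rw [← hxp]; exact hb
      have e1 := xor_two_pow_of_testBit_true hb
      have e2 := xor_two_pow_of_testBit_true hb'
      rw [hx', hy']
      omega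
  have hy'lt : y' < 2 ^ C.m :=
    Nat.xor_lt_two_pow hxw (Nat.pow_lt_pow_of_lt (by norm_num) hpm)
  have hx'w_lt : x' + w < 2 ^ C.m := by rw [hx'w]; exact hy'lt
  have hjv_ne : ∀ β, β < C.k - C.s → C.jv β ≠ p := fun β hβ => C.hdisj β hβ _ hpmem
  have hivinj : ∀ β, β < C.m - C.k → β ≠ α → C.iv (C.perm β) ≠ p := by
    intro β hβ hne heq
    have h1 : C.perm β = C.perm α :=
      C.hiv_inj _ (C.hperm.mapsTo hβ) _ hpmem heq
    exact hne (C.hperm.injOn hβ hαlt h1)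
  have hv' : C.bvalid t1 t1' x' y' := by
    refine ⟨?_, ?_, ?_⟩
    · intro β hβ
      have hβ' := Finset.mem_range.mp hβ
      rw [hxkeep _ (hjv_ne β hβ'), hykeep _ (hjv_ne β hβ')]
      exact hv.1 β hβ
    · by_cases hpg : C.gamma1 = p
      · rw [hpg, hxflip, hyflip, hxp]
      · rw [hxkeep _ hpg, hykeep _ hpg]
        exact hv.2.1
    · intro γ hγ
      have hγ' := Finset.mem_range.mp hγ
      have htop : C.m - C.s + γ ≠ p := by omega
      rw [hxkeep _ htop, hykeep _ htop]
      exact hv.2.2 γ hγ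
  have hdeq : C.dset w x' = C.dset w x := by
    rw [dset, dset]
    apply Finset.filter_congr
    intro β hβ
    have hβ' := Finset.mem_range.mp hβ
    rw [hx'w]
    by_cases hba : β = α
    · subst hba
      rw [← hp, hxflip, hyflip]
      constructor
      · intro h h2
        apply h
        rw [h2]
      · intro h h2
        apply h
        cases hxb : x.testBit p <;> cases hyb : y.testBit p <;>
          rw [hxb, hyb] at h2 <;> simp_all
    · rw [hxkeep _ (hivinj β hβ' hba), hykeep _ (hivinj β hβ' hba)]
  have hne0' : (C.dset w x').Nonempty := by rw [hdeq]; exact hne0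
  have hmineq : (C.dset w x').min' hne0' = β₀ := by
    apply le_antisymm
    · apply Finset.min'_le
      rw [hdeq]
      exact hβ₀mem
    · apply Finset.le_min'
      intro b hb
      rw [hdeq] at hb
      exact Finset.min'_le _ _ hb
  have hflip2 : C.flip w (C.flip w x) = x := by
    rw [hflip, flip, dif_pos hne0', hmineq, ← hα, ← hp, hx', xor_cancel_right]
  have hflipne : C.flip w x ≠ x := by
    rw [hflip]
    intro h
    have h2 := hxflip
    rw [h] at h2
    cases hxb : x.testBit p <;> rw [hxb] at h2 <;> simp at h2
  -- preservation of ccoef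
  have hbitcx : ∀ t, t ≠ p → bitc C.q x' t = bitc C.q x t := by
    intro t ht; rw [bitc, bitc, hxkeep _ ht]
  have hbitcy : ∀ t, t ≠ p → bitc C.q y' t = bitc C.q y t := by
    intro t ht; rw [bitc, bitc, hykeep _ ht]
  have hccoef : ∀ β ∈ Finset.range (C.k + 1),
      C.ccoef t1 t1' t2 t2' x' y' β = C.ccoef t1 t1' t2 t2' x y β := by
    intro β hβ
    have hβ' := Finset.mem_range.mp hβ
    by_cases hbk : β = C.k
    · subst hbk
      rw [C.ccoef_top, C.ccoef_top, bitc, bitc, bitc, bitc, hv'.2.1, hv.2.1,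
        sub_self, sub_self]
    · have hβk : β < C.k := by omega
      have hjne : C.jfull β ≠ p := by
        rw [jfull]
        split
        · exact hjv_ne β ‹_›
        · omega
      rw [ccoef, ccoef, if_neg hbk, if_neg hbk, hbitcx _ hjne, hbitcy _ hjne]
  -- the chi cancellation
  set e : ℕ → Bool := fun β => x.testBit (C.jv β) with he
  obtain ⟨uc, vc, v0, hfe⟩ := C.hf e
  have hxlt : x < 2 ^ C.m := by omega
  have hx'lt : x' < 2 ^ C.m := by omega
  have hfx := hfe x hxlt (fun β hβ => rfl)
  have hfx' := hfe x' hx'lt (fun β hβ => by rw [hxkeep _ (hjv_ne β hβ)])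
  have hfy := hfe y hxw (fun β hβ => (hv.1 β (Finset.mem_range.mpr hβ)).symm)
  have hfy' := hfe y' hy'lt (fun β hβ => by
    rw [hykeep _ (hjv_ne β hβ)]
    exact (hv.1 β (Finset.mem_range.mpr hβ)).symm)
  have hd : bitc C.q x' p - bitc C.q x p = bitc C.q y' p - bitc C.q y p := by
    rw [bitc, bitc, bitc, bitc, hxflip, hyflip, hxp]
  have hLd : ∀ (z z' : ℕ), (∀ t, t ≠ p → z'.testBit t = z.testBit t) →
      (∑ β ∈ Finset.range (C.m - C.k), uc β * bitc C.q z' (C.iv β))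
        - (∑ β ∈ Finset.range (C.m - C.k), uc β * bitc C.q z (C.iv β))
      = uc (C.perm α) * (bitc C.q z' p - bitc C.q z p) := by
    intro z z' hkeep
    rw [← Finset.sum_sub_distrib]
    rw [Finset.sum_eq_single_of_mem (C.perm α) (Finset.mem_range.mpr hpmem)]
    · rw [← hp]; ring
    · intro b hb hbne
      have hb' := Finset.mem_range.mp hb
      have hbp : C.iv b ≠ p := by
        intro heq
        exact hbne (C.hiv_inj _ hb' _ hpmem heq)
      rw [bitc, bitc, hkeep _ hbp]
      ring
  have hLx := hLd x x' hxkeep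
  have hLy := hLd y y' hykeep
  have hTd : ∀ (z z' : ℕ), (∀ t, t ≠ p → z'.testBit t = z.testBit t) →
      (∑ β ∈ Finset.range C.s, vc β * bitc C.q z' (C.m - C.s + β))
        = ∑ β ∈ Finset.range C.s, vc β * bitc C.q z (C.m - C.s + β) := by
    intro z z' hkeep
    apply Finset.sum_congr rfl
    intro β hβ
    rw [bitc, bitc, hkeep _ (by omega)]
  have hQd :
      ((∑ β ∈ Finset.range (C.m - C.k - 1),
          bitc C.q x' (C.iv (C.perm β)) * bitc C.q x' (C.iv (C.perm (β + 1))))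
        - (∑ β ∈ Finset.range (C.m - C.k - 1),
          bitc C.q x (C.iv (C.perm β)) * bitc C.q x (C.iv (C.perm (β + 1)))))
      - ((∑ β ∈ Finset.range (C.m - C.k - 1),
          bitc C.q y' (C.iv (C.perm β)) * bitc C.q y' (C.iv (C.perm (β + 1))))
        - (∑ β ∈ Finset.range (C.m - C.k - 1),
          bitc C.q y (C.iv (C.perm β)) * bitc C.q y (C.iv (C.perm (β + 1)))))
      = (bitc C.q x' p - bitc C.q x p)
        * (bitc C.q x (C.iv (C.perm β₀)) - bitc C.q y (C.iv (C.perm β₀))) := by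
    rw [← Finset.sum_sub_distrib, ← Finset.sum_sub_distrib, ← Finset.sum_sub_distrib]
    rw [Finset.sum_eq_single_of_mem α (Finset.mem_range.mpr hα1)]
    · have hnear : C.iv (C.perm β₀) ≠ p := hivinj β₀ (by omega) (by omega)
      rw [hα₀, ← hp, hbitcx _ hnear, hbitcy _ hnear]
      linear_combination (bitc C.q y (C.iv (C.perm β₀))) * hd
    · intro b hb hbne
      have hb' := Finset.mem_range.mp hb
      by_cases hb1 : b + 1 = α
      · have hBne : C.iv (C.perm b) ≠ p := hivinj b (by omega) (by omega)
        have hBeq : bitc C.q x (C.iv (C.perm b)) = bitc C.q y (C.iv (C.perm b)) := by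
          rw [bitc, bitc, hmin b (by omega)]
        rw [hb1, ← hp, hbitcx _ hBne, hbitcy _ hBne]
        linear_combination (bitc C.q x (C.iv (C.perm b))) * hd
          + (bitc C.q y' p - bitc C.q y p) * hBeq
      · have h1 : C.iv (C.perm b) ≠ p := hivinj b (by omega) hbne
        have h2 : C.iv (C.perm (b + 1)) ≠ p := hivinj (b + 1) (by omega) (by omega)
        rw [hbitcx _ h1, hbitcy _ h1, hbitcx _ h2, hbitcy _ h2]
        ring
  have hγ2ne : C.gamma2 ≠ p := by
    rw [gamma2]
    exact hivinj (C.m - C.k - 1) (by omega) (by omega)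
  have hcz : C.czero t1 t1' t2 t2' x' y' = C.czero t1 t1' t2 t2' x y
      + ((C.q / 2 : ℕ) : ZMod C.q) * ((bitc C.q x' p - bitc C.q x p)
          * (bitc C.q x (C.iv (C.perm β₀)) - bitc C.q y (C.iv (C.perm β₀)))) := by
    rw [czero, czero, hfx, hfx', hfy, hfy', hlf]
    have hBsum : ∑ β ∈ Finset.range C.k,
        (((C.bbit t1 t2 β : ℕ) : ZMod C.q) * bitc C.q x' (C.jfull β)
          - ((C.bbit t1' t2' β : ℕ) : ZMod C.q) * bitc C.q y' (C.jfull β))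
        = ∑ β ∈ Finset.range C.k,
        (((C.bbit t1 t2 β : ℕ) : ZMod C.q) * bitc C.q x (C.jfull β)
          - ((C.bbit t1' t2' β : ℕ) : ZMod C.q) * bitc C.q y (C.jfull β)) := by
      apply Finset.sum_congr rfl
      intro β hβ
      have hβ' := Finset.mem_range.mp hβ
      have hjne : C.jfull β ≠ p := by
        rw [jfull]
        split
        · exact hjv_ne β ‹_›
        · omega
      rw [hbitcx _ hjne, hbitcy _ hjne]
    rw [hBsum, hbitcx _ hγ2ne, hbitcy _ hγ2ne, hTd x x' hxkeep, hTd y y' hykeep]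
    linear_combination (((C.q / 2 : ℕ)) : ZMod C.q) * hQd + hLx - hLy + uc (C.perm α) * hd
  have hpm1 : bitc C.q x' p - bitc C.q x p = 1 ∨ bitc C.q x' p - bitc C.q x p = -1 := by
    rw [bitc, bitc, hxflip]
    cases x.testBit p <;> simp
  have hpm2 : bitc C.q x (C.iv (C.perm β₀)) - bitc C.q y (C.iv (C.perm β₀)) = 1
      ∨ bitc C.q x (C.iv (C.perm β₀)) - bitc C.q y (C.iv (C.perm β₀)) = -1 := by
    have hd0 : ¬ (x.testBit (C.iv (C.perm β₀)) = y.testBit (C.iv (C.perm β₀))) := hβ₀d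
    revert hd0
    rw [bitc, bitc]
    cases x.testBit (C.iv (C.perm β₀)) <;> cases y.testBit (C.iv (C.perm β₀)) <;> simp
  have hchi : chiQ C.q (C.czero t1 t1' t2 t2' x' y')
      = - chiQ C.q (C.czero t1 t1' t2 t2' x y) := by
    rw [hcz, chiQ_add, chiQ_half_mul hq2 hqe]
    rcases hpm1 with h1 | h1 <;> rcases hpm2 with h2 | h2 <;> rw [h1, h2] <;>
      norm_num [epsQ_one hq2, epsQ_neg_one hq2 hqe]
  rw [hflip] at hflip2 hflipne
  rw [hflip, hx'w]
  exact ⟨hy'lt, hv', hflip2, hflipne, hchi, hccoef⟩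

end ZCZSetup

namespace ZCZSetup

variable (C : ZCZSetup)

lemma key_sum (t1 t1' t2 t2' w : ℕ) (ht1 : t1 < 2 ^ C.s) (ht1' : t1' < 2 ^ C.s)
    (hne : t1 ≠ t1') (hw : w < 2 ^ (C.m - C.s)) :
    ∑ x ∈ Finset.range (2 ^ C.m - w),
      (chiQ C.q (C.czero t1 t1' t2 t2' x (x + w))
        * ∏ β ∈ Finset.range (C.k + 1),
            (1 + epsQ C.q (C.ccoef t1 t1' t2 t2' x (x + w) β))) = 0 := by
  classical
  rcases Nat.eq_zero_or_pos w with rfl | hwpos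
  · apply Finset.sum_eq_zero
    intro x hx
    rw [C.prod_eps_eq_zero t1 t1' t2 t2' x (x + 0)
      (fun hv => hne (C.bvalid_self t1 t1' ht1 ht1' x (by simpa using hv))), mul_zero]
  · have hwm : w < 2 ^ C.m :=
      lt_of_lt_of_le hw (Nat.pow_le_pow_right (by norm_num) (Nat.sub_le _ _))
    apply Finset.sum_involution
      (fun x _ => if C.bvalid t1 t1' x (x + w) then C.flip w x else x)
    · intro x hx
      by_cases hv : C.bvalid t1 t1' x (x + w)
      · have hxw : x + w < 2 ^ C.m := by
          have := Finset.mem_range.mp hx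
          omega
        obtain ⟨hs1, hs2, hs3, hs4, hs5, hs6⟩ :=
          C.flip_spec t1 t1' t2 t2' w x hwpos hw hxw hv
        have hpr : ∏ β ∈ Finset.range (C.k + 1),
            (1 + epsQ C.q (C.ccoef t1 t1' t2 t2' (C.flip w x) (C.flip w x + w) β))
            = ∏ β ∈ Finset.range (C.k + 1),
            (1 + epsQ C.q (C.ccoef t1 t1' t2 t2' x (x + w) β)) :=
          Finset.prod_congr rfl (fun β hβ => by rw [hs6 β hβ])
        rw [if_pos hv, hpr, hs5]
        ring
      · rw [if_neg hv, C.prod_eps_eq_zero t1 t1' t2 t2' x (x + w) hv]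
        simp
    · intro x hx hF
      by_cases hv : C.bvalid t1 t1' x (x + w)
      · have hxw : x + w < 2 ^ C.m := by
          have := Finset.mem_range.mp hx
          omega
        obtain ⟨hs1, hs2, hs3, hs4, hs5, hs6⟩ :=
          C.flip_spec t1 t1' t2 t2' w x hwpos hw hxw hv
        rw [if_pos hv]
        exact hs4
      · exfalso
        apply hF
        rw [C.prod_eps_eq_zero t1 t1' t2 t2' x (x + w) hv, mul_zero]
    · intro x hx
      by_cases hv : C.bvalid t1 t1' x (x + w)
      · have hxw : x + w < 2 ^ C.m := by
          have := Finset.mem_range.mp hx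
          omega
        obtain ⟨hs1, hs2, hs3, hs4, hs5, hs6⟩ :=
          C.flip_spec t1 t1' t2 t2' w x hwpos hw hxw hv
        rw [if_pos hv]
        exact Finset.mem_range.mpr (by omega)
      · rw [if_neg hv]
        exact hx
    · intro x hx
      by_cases hv : C.bvalid t1 t1' x (x + w)
      · have hxw : x + w < 2 ^ C.m := by
          have := Finset.mem_range.mp hx
          omega
        obtain ⟨hs1, hs2, hs3, hs4, hs5, hs6⟩ :=
          C.flip_spec t1 t1' t2 t2' w x hwpos hw hxw hv
        simp only [if_pos hv, if_pos hs2]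
        exact hs3
      · simp only [if_neg hv]

lemma main_nonneg (t1 t1' t2 t2' w : ℕ) (ht1 : t1 < 2 ^ C.s) (ht1' : t1' < 2 ^ C.s)
    (hne : t1 ≠ t1') (hw : w < 2 ^ (C.m - C.s)) :
    ∑ ν ∈ Finset.range (2 ^ (C.k + 1)), ∑ i ∈ Finset.range (2 ^ C.m - w),
      chiQ C.q (C.gExp t1 t2 ν i - C.gExp t1' t2' ν (i + w)) = 0 := by
  haveI : NeZero C.q := ⟨by have := C.hq; omega⟩
  rw [Finset.sum_comm]
  have h1 : ∀ i ∈ Finset.range (2 ^ C.m - w),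
      ∑ ν ∈ Finset.range (2 ^ (C.k + 1)),
        chiQ C.q (C.gExp t1 t2 ν i - C.gExp t1' t2' ν (i + w))
      = chiQ C.q (C.czero t1 t1' t2 t2' i (i + w))
        * ∏ β ∈ Finset.range (C.k + 1),
            (1 + epsQ C.q (C.ccoef t1 t1' t2 t2' i (i + w) β)) :=
    fun i _ => C.inner_sum t1 t1' t2 t2' i (i + w)
  rw [Finset.sum_congr rfl h1]
  exact C.key_sum t1 t1' t2 t2' w ht1 ht1' hne hw

lemma sseq_mul_conj (t1 t2 t1' t2' ν a b : ℕ) :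
    C.Sseq t1 t2 ν a * (starRingEnd ℂ) (C.Sseq t1' t2' ν b)
      = chiQ C.q (C.gExp t1 t2 ν a - C.gExp t1' t2' ν b) := by
  haveI : NeZero C.q := ⟨by have := C.hq; omega⟩
  rw [Sseq, Sseq]
  exact chiQ_sub _ _

end ZCZSetup
/-- **Lemma 2, second part.** Any two Golay complementary sets belonging to different
CCCs of the family have a zero cross-correlation zone of width `2^{m−s}`: for all
`0 ≤ t_1 ≠ t_1' ≤ 2^s − 1`, all `0 ≤ t_2, t_2' ≤ 2^{k+1} − 1` and all shifts
`|u| < 2^{m−s}`, the row-wise ACCF sum vanishes. -/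
theorem lemma2_second_part (C : ZCZSetup) (t1 t1' : ℕ)
    (ht1 : t1 < 2 ^ C.s) (ht1' : t1' < 2 ^ C.s) (hne : t1 ≠ t1')
    (t2 t2' : ℕ) (ht2 : t2 < 2 ^ (C.k + 1)) (ht2' : t2' < 2 ^ (C.k + 1))
    (u : ℤ) (hu : u.natAbs < 2 ^ (C.m - C.s)) :
    (∑ ν ∈ Finset.range (2 ^ (C.k + 1)),
        accf (2 ^ C.m) (C.Sseq t1 t2 ν) (C.Sseq t1' t2' ν) u) = 0 := by
  haveI : NeZero C.q := ⟨by have := C.hq; omega⟩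
  rcases le_or_gt 0 u with hu0 | hu0
  · have hLHS : ∀ ν ∈ Finset.range (2 ^ (C.k + 1)),
        accf (2 ^ C.m) (C.Sseq t1 t2 ν) (C.Sseq t1' t2' ν) u
        = ∑ i ∈ Finset.range (2 ^ C.m - u.toNat),
            chiQ C.q (C.gExp t1 t2 ν i - C.gExp t1' t2' ν (i + u.toNat)) := by
      intro ν _
      rw [accf, if_pos hu0]
      exact Finset.sum_congr rfl (fun i _ => C.sseq_mul_conj t1 t2 t1' t2' ν i (i + u.toNat))
    rw [Finset.sum_congr rfl hLHS]
    exact C.main_nonneg t1 t1' t2 t2' u.toNat ht1 ht1' hne (by omega)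
  · have hv : ¬ (0 ≤ u) := not_le.mpr hu0
    have hLHS : ∀ ν ∈ Finset.range (2 ^ (C.k + 1)),
        accf (2 ^ C.m) (C.Sseq t1 t2 ν) (C.Sseq t1' t2' ν) u
        = (starRingEnd ℂ) (∑ i ∈ Finset.range (2 ^ C.m - (-u).toNat),
            chiQ C.q (C.gExp t1' t2' ν i - C.gExp t1 t2 ν (i + (-u).toNat))) := by
      intro ν _
      rw [accf, if_neg hv, map_sum]
      apply Finset.sum_congr rfl
      intro i _
      rw [← C.sseq_mul_conj t1' t2' t1 t2 ν i (i + (-u).toNat), map_mul, Complex.conj_conj]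
      ring
    rw [Finset.sum_congr rfl hLHS, ← map_sum,
      C.main_nonneg t1' t1 t2' t2 (-u).toNat ht1' ht1 hne.symm (by omega), map_zero]
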